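/- Let G = (V,E) be a complete graph and let K be any integer with 0 ≤ K ≤ (|V|−3)(|V|−4)/6. Then there exists an edge labeling Y : E → {−1,+1} with Δ(Y) = K. -/

import Mathlib

open scoped Classical

section CCAux
open Finset

variable {W : Type*} [CommRing W] [DecidableEq W]

lemma cc_tri_eq {t : Finset W} (h3 : t.card = 3) (hs : t.sum id = 0)
    {x y : W} (hx : x ∈ t) (hy : y ∈ t) (hxy : x ≠ y) :
    t = {x, y, -x-y} := by
  obtain ⟨a, b, c, hab, hac, hbc, rfl⟩ := Finset.card_eq_three.mp h3
  have hsum : a + b + c = 0 := by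
    rw [Finset.sum_insert (by simp [hab, hac]), Finset.sum_insert (by simp [hbc]),
      Finset.sum_singleton] at hs
    simpa [id, add_assoc] using hs
  simp only [Finset.mem_insert, Finset.mem_singleton] at hx hy
  rcases hx with rfl|rfl|rfl <;> rcases hy with rfl|rfl|rfl <;>
    first
    | exact absurd rfl hxy
    | ((first
        | (have h3' : -x - y = c := by linear_combination -hsum)
        | (have h3' : -x - y = b := by linear_combination -hsum)
        | (have h3' : -x - y = a := by linear_combination -hsum)) <;>
      rw [h3'] <;> ext w <;>
      simp only [Finset.mem_insert, Finset.mem_singleton] <;> tauto)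

lemma cc_tri_edge_disj {t t' : Finset W} (h3 : t.card = 3) (hs : t.sum id = 0)
    (h3' : t'.card = 3) (hs' : t'.sum id = 0) {e : Sym2 W}
    (he : e ∈ t.sym2) (he' : e ∈ t'.sym2) (hd : ¬ e.IsDiag) : t = t' := by
  obtain ⟨⟨x, y⟩, rfl⟩ := Quot.exists_rep e
  have hxy : x ≠ y := by simpa [Sym2.mk_isDiag_iff] using hd
  rw [Finset.mk_mem_sym2_iff] at he he'
  rw [cc_tri_eq h3 hs he.1 he.2 hxy, cc_tri_eq h3' hs' he'.1 he'.2 hxy]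

variable (W) [Fintype W]

noncomputable def ccTriSet : Finset (Finset W) :=
  univ.filter fun t => t.card = 3 ∧ t.sum id = 0

noncomputable def ccPairSet : Finset (W × W) :=
  univ.filter fun p => p.1 ≠ p.2 ∧ p.1 + p.1 + p.2 ≠ 0 ∧ p.1 + p.2 + p.2 ≠ 0

variable {W}

lemma cc_mem_triSet_iff {t : Finset W} : t ∈ ccTriSet W ↔ t.card = 3 ∧ t.sum id = 0 := by
  simp [ccTriSet]

lemma cc_phi_mem {p : W × W} (hp : p ∈ ccPairSet W) :
    ({p.1, p.2, -p.1-p.2} : Finset W) ∈ ccTriSet W := by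
  simp only [ccPairSet, mem_filter, mem_univ, true_and] at hp
  obtain ⟨h1, h2, h3⟩ := hp
  rw [cc_mem_triSet_iff]
  constructor
  · rw [Finset.card_eq_three]
    exact ⟨p.1, p.2, -p.1-p.2, h1,
      fun h => h2 (by linear_combination h), fun h => h3 (by linear_combination h), rfl⟩
  · rw [Finset.sum_insert (by
        simp only [Finset.mem_insert, Finset.mem_singleton]
        push_neg
        exact ⟨h1, fun h => h2 (by linear_combination h)⟩),
      Finset.sum_insert (by
        simp only [Finset.mem_singleton]
        exact fun h => h3 (by linear_combination h)),
      Finset.sum_singleton]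
    simp only [id]
    ring

lemma cc_card_pairSet_le :
    (ccPairSet W).card ≤ 6 * (ccTriSet W).card := by
  set φ : W × W → Finset W := fun p => ({p.1, p.2, -p.1-p.2} : Finset W) with hφ
  have himg : (ccPairSet W).image φ ⊆ ccTriSet W := by
    intro t ht
    obtain ⟨p, hp, rfl⟩ := Finset.mem_image.mp ht
    exact cc_phi_mem hp
  calc (ccPairSet W).card
      = ∑ b ∈ (ccPairSet W).image φ, ((ccPairSet W).filter fun p => φ p = b).card :=
        Finset.card_eq_sum_card_image φ _
    _ ≤ ∑ _b ∈ (ccPairSet W).image φ, 6 := by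
        apply Finset.sum_le_sum
        intro b hb
        have hb3 : b.card = 3 := (cc_mem_triSet_iff.mp (himg hb)).1
        have hsub : ((ccPairSet W).filter fun p => φ p = b) ⊆ b.offDiag := by
          intro p hp
          simp only [mem_filter] at hp
          obtain ⟨hpP, hpb⟩ := hp
          simp only [ccPairSet, mem_filter, mem_univ, true_and] at hpP
          rw [Finset.mem_offDiag]
          refine ⟨?_, ?_, hpP.1⟩ <;> rw [← hpb] <;> simp [hφ]
        calc _ ≤ b.offDiag.card := Finset.card_le_card hsub
          _ = 6 := by rw [Finset.offDiag_card, hb3]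
    _ = 6 * ((ccPairSet W).image φ).card := by rw [Finset.sum_const, smul_eq_mul, mul_comm]
    _ ≤ 6 * (ccTriSet W).card := Nat.mul_le_mul_left 6 (Finset.card_le_card himg)

lemma cc_card_pairSet_ge :
    Fintype.card W * Fintype.card W ≤ (ccPairSet W).card + 3 * Fintype.card W := by
  classical
  have hsplit := Finset.card_filter_add_card_filter_not
    (s := (univ : Finset (W × W)))
    (p := fun p => p.1 ≠ p.2 ∧ p.1 + p.1 + p.2 ≠ 0 ∧ p.1 + p.2 + p.2 ≠ 0)
  have huniv : (univ : Finset (W × W)).card = Fintype.card W * Fintype.card W := by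
    simp [Fintype.card_prod]
  have hbad : ((univ : Finset (W × W)).filter fun p =>
      ¬(p.1 ≠ p.2 ∧ p.1 + p.1 + p.2 ≠ 0 ∧ p.1 + p.2 + p.2 ≠ 0)).card
      ≤ 3 * Fintype.card W := by
    have hsub : ((univ : Finset (W × W)).filter fun p =>
        ¬(p.1 ≠ p.2 ∧ p.1 + p.1 + p.2 ≠ 0 ∧ p.1 + p.2 + p.2 ≠ 0)) ⊆
        (univ.image fun x : W => (x, x)) ∪
        (univ.image fun x : W => (x, -x-x)) ∪
        (univ.image fun y : W => (-y-y, y)) := by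
      intro p hp
      simp only [mem_filter, mem_univ, true_and] at hp
      push_neg at hp
      simp only [Finset.mem_union, Finset.mem_image, mem_univ, true_and]
      by_cases h1 : p.1 = p.2
      · exact Or.inl (Or.inl ⟨p.1, by simp [Prod.ext_iff, h1]⟩)
      · by_cases h2 : p.1 + p.1 + p.2 = 0
        · exact Or.inl (Or.inr ⟨p.1, by simp [Prod.ext_iff]; linear_combination -h2⟩)
        · have h3 := hp h1 h2
          exact Or.inr ⟨p.2, by simp [Prod.ext_iff]; linear_combination -h3⟩
    calc _ ≤ _ := Finset.card_le_card hsub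
      _ ≤ _ := by
          refine le_trans (Finset.card_union_le _ _) ?_
          have c1 := Finset.card_image_le (s := (univ : Finset W)) (f := fun x : W => (x, x))
          have c2 := Finset.card_image_le (s := (univ : Finset W)) (f := fun x : W => (x, -x-x))
          have c3 := Finset.card_image_le (s := (univ : Finset W)) (f := fun y : W => (-y-y, y))
          have c4 := Finset.card_union_le (univ.image fun x : W => (x, x))
            (univ.image fun x : W => (x, -x-x))
          simp only [Finset.card_univ] at c1 c2 c3
          omega
  rw [ccPairSet]
  omega

variable [Nonempty W]

noncomputable def ccNegEdge (t : Finset W) : Sym2 W :=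
  if h : (t.sym2.filter fun e => ¬ e.IsDiag).Nonempty then h.choose
  else Sym2.mk (Classical.arbitrary (W × W)).1 (Classical.arbitrary (W × W)).2

omit [CommRing W] [Fintype W] in
lemma ccNegEdge_spec {t : Finset W} (h3 : t.card = 3) :
    ccNegEdge t ∈ t.sym2 ∧ ¬ (ccNegEdge t).IsDiag := by
  obtain ⟨a, b, c, hab, hac, hbc, rfl⟩ := Finset.card_eq_three.mp h3
  have hne : ((({a,b,c} : Finset W)).sym2.filter fun e => ¬ e.IsDiag).Nonempty := by
    refine ⟨s(a,b), ?_⟩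
    simp [Finset.mk_mem_sym2_iff, Sym2.mk_isDiag_iff, hab]
  rw [ccNegEdge, dif_pos hne]
  have := hne.choose_spec
  rw [Finset.mem_filter] at this
  exact this

omit [Fintype W] in
lemma ccNegEdge_full {t : Finset W} (h3 : t.card = 3) (hs : t.sum id = 0) :
    ∃ x y : W, x ≠ y ∧ ccNegEdge t = s(x, y) ∧ t = {x, y, -x-y} ∧ -x-y ≠ x ∧ -x-y ≠ y := by
  obtain ⟨hmem, hnd⟩ := ccNegEdge_spec h3
  obtain ⟨⟨x, y⟩, hrep⟩ := Quot.exists_rep (ccNegEdge t)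
  have hrep' : ccNegEdge t = s(x, y) := hrep.symm
  rw [hrep'] at hmem hnd
  have hxy : x ≠ y := by simpa [Sym2.mk_isDiag_iff] using hnd
  rw [Finset.mk_mem_sym2_iff] at hmem
  have hteq : t = {x, y, -x-y} := cc_tri_eq h3 hs hmem.1 hmem.2 hxy
  have hcard2 : ∀ u v : W, ({u, v} : Finset W).card ≤ 2 :=
    fun u v => le_trans (Finset.card_insert_le _ _) (by simp)
  refine ⟨x, y, hxy, hrep', hteq, ?_, ?_⟩
  · intro h
    rw [h] at hteq
    have h2 : t = ({x, y} : Finset W) := by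
      rw [hteq]; ext w; simp only [Finset.mem_insert, Finset.mem_singleton]; tauto
    rw [h2] at h3
    have := hcard2 x y
    omega
  · intro h
    rw [h] at hteq
    have h2 : t = ({x, y} : Finset W) := by
      rw [hteq]; ext w; simp only [Finset.mem_insert, Finset.mem_singleton]; tauto
    rw [h2] at h3
    have := hcard2 x y
    omega

omit [Nonempty W] in
lemma cc_le_card_triSet {K : ℕ}
    (h : 6 * K + 3 * Fintype.card W ≤ Fintype.card W * Fintype.card W) :
    K ≤ (ccTriSet W).card := by
  have h1 := cc_card_pairSet_le (W := W)
  have h2 := cc_card_pairSet_ge (W := W)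
  omega

end CCAux

/-- Cost of a clustering `f` of the vertices. -/
noncomputable def clusterCost {V : Type*} [Fintype V] {β : Type*}
    (G : SimpleGraph V) (Y : Sym2 V → ℤ) (f : V → β) : ℕ :=
  (G.edgeFinset.filter fun e =>
    (Y e = -1 ∧ Sym2.lift ⟨fun u v => f u = f v, fun _ _ => propext eq_comm⟩ e) ∨
    (Y e = 1 ∧ ¬ Sym2.lift ⟨fun u v => f u = f v, fun _ _ => propext eq_comm⟩ e)).card

/-- Correlation clustering index Δ(Y). -/
noncomputable def ccIndex {V : Type*} [Fintype V] (G : SimpleGraph V) (Y : Sym2 V → ℤ) : ℕ :=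
  sInf {c | ∃ f : V → ℕ, clusterCost G Y f = c}

lemma clusterCost_const {V : Type*} [Fintype V] (G : SimpleGraph V) (Y : Sym2 V → ℤ) :
    clusterCost G Y (fun _ : V => (0:ℕ)) =
      (G.edgeFinset.filter fun e => Y e = -1).card := by
  unfold clusterCost
  congr 1
  apply Finset.filter_congr
  intro e he
  clear he
  induction e using Sym2.ind with
  | _ u v => simp [Sym2.lift_mk]

/-- On the complete graph, every value `K ≤ (|V|-3)(|V|-4)/6` is achieved as Δ(Y)
for some ±1 edge labeling. -/
theorem stmt3 {V : Type*} [Fintype V] (K : ℕ)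
    (hK : K ≤ (Fintype.card V - 3) * (Fintype.card V - 4) / 6) :
    ∃ Y : Sym2 V → ℤ, (∀ e, Y e = 1 ∨ Y e = -1) ∧
      ccIndex (⊤ : SimpleGraph V) Y = K := by
  classical
  rcases Nat.eq_zero_or_pos K with rfl | hKpos
  · refine ⟨fun _ => 1, fun _ => Or.inl rfl, ?_⟩
    have h0 : clusterCost (⊤ : SimpleGraph V) (fun _ => 1) (fun _ : V => (0 : ℕ)) = 0 := by
      rw [clusterCost_const]
      rw [Finset.card_eq_zero, Finset.filter_eq_empty_iff]
      intro e _
      norm_num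
    have hmem : (0:ℕ) ∈ {c | ∃ f : V → ℕ,
        clusterCost (⊤ : SimpleGraph V) (fun _ => 1) f = c} := ⟨_, h0⟩
    exact Nat.le_zero.mp (Nat.sInf_le hmem)
  · set n := Fintype.card V with hn
    have hprod : 6 * K ≤ (n - 3) * (n - 4) := by
      calc 6 * K ≤ 6 * ((n-3)*(n-4)/6) := Nat.mul_le_mul_left 6 hK
        _ = (n-3)*(n-4)/6 * 6 := mul_comm _ _
        _ ≤ (n-3)*(n-4) := Nat.div_mul_le_self _ _
    have hn5 : 5 ≤ n := by
      by_contra hlt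
      push_neg at hlt
      have : (n-3)*(n-4) = 0 := by
        rw [show n - 4 = 0 by omega, mul_zero]
      omega
    haveI : NeZero n := ⟨by omega⟩
    haveI : Nonempty V := Fintype.card_pos_iff.mp (by omega)
    have hcard : Fintype.card (ZMod n) = n := ZMod.card n
    have hT : K ≤ (ccTriSet (ZMod n)).card := by
      apply cc_le_card_triSet
      rw [hcard]
      have e2 : (n-3)*(n-4) ≤ (n-3)*n := Nat.mul_le_mul_left _ (by omega)
      have e1 : (n-3)*n + 3*n = n*n := by
        rw [← Nat.add_mul]
        congr 1
        omega
      omega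
    obtain ⟨S, hSsub, hScard⟩ := Finset.exists_subset_card_eq hT
    have hS3 : ∀ t ∈ S, t.card = 3 ∧ t.sum id = 0 :=
      fun t ht => cc_mem_triSet_iff.mp (hSsub ht)
    let g : ZMod n ≃ V := Fintype.equivOfCardEq (by rw [hcard])
    set N : Finset (Sym2 (ZMod n)) := S.image ccNegEdge with hN
    set Y : Sym2 V → ℤ := fun e => if Sym2.map g.symm e ∈ N then -1 else 1 with hY
    have hmapinv : ∀ e : Sym2 V, Sym2.map g (Sym2.map g.symm e) = e := by
      intro e
      rw [Sym2.map_map, Equiv.self_comp_symm, Sym2.map_id, id_eq]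
    have hmapinv' : ∀ e : Sym2 (ZMod n), Sym2.map g.symm (Sym2.map g e) = e := by
      intro e
      rw [Sym2.map_map, Equiv.symm_comp_self, Sym2.map_id, id_eq]
    have hNedge : ∀ t ∈ S, ccNegEdge t ∈ t.sym2 ∧ ¬ (ccNegEdge t).IsDiag :=
      fun t ht => ccNegEdge_spec (hS3 t ht).1
    have hinj : Set.InjOn ccNegEdge (↑S : Set (Finset (ZMod n))) := by
      intro t ht t' ht' hee
      rw [Finset.mem_coe] at ht ht'
      obtain ⟨he, hd⟩ := hNedge t ht
      obtain ⟨he', _⟩ := hNedge t' ht'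
      rw [hee] at he hd
      exact cc_tri_edge_disj (hS3 t ht).1 (hS3 t ht).2 (hS3 t' ht').1 (hS3 t' ht').2 he he' hd
    have hNcard : N.card = K := by rw [hN, Finset.card_image_of_injOn hinj, hScard]
    have hNdiag : ∀ e ∈ N, ¬ e.IsDiag := by
      intro e he
      obtain ⟨t, ht, rfl⟩ := Finset.mem_image.mp he
      exact (hNedge t ht).2
    have hNuniq : ∀ t ∈ S, ∀ e ∈ N, e ∈ t.sym2 → e = ccNegEdge t := by
      intro t ht e he het
      obtain ⟨t', ht', rfl⟩ := Finset.mem_image.mp he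
      have heq : t' = t := cc_tri_edge_disj (hS3 t' ht').1 (hS3 t' ht').2
        (hS3 t ht).1 (hS3 t ht).2 (hNedge t' ht').1 het (hNedge t' ht').2
      rw [heq]
    refine ⟨Y, ?_, ?_⟩
    · intro e
      simp only [hY]
      split <;> simp
    -- upper bound clustering
    have hset : ((⊤ : SimpleGraph V).edgeFinset.filter fun e => Y e = -1)
        = N.image (Sym2.map g) := by
      ext e
      simp only [Finset.mem_filter, SimpleGraph.mem_edgeFinset, SimpleGraph.edgeSet_top,
        Set.mem_setOf_eq, Finset.mem_image]
      constructor
      · rintro ⟨hd, hYe⟩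
        simp only [hY] at hYe
        by_cases hmem : Sym2.map g.symm e ∈ N
        · exact ⟨_, hmem, hmapinv e⟩
        · rw [if_neg hmem] at hYe; norm_num at hYe
      · rintro ⟨e', he', rfl⟩
        refine ⟨fun h => hNdiag e' he' ((Sym2.isDiag_map g.injective).mp h), ?_⟩
        simp only [hY]
        rw [hmapinv', if_pos he']
    have hccf : ∀ (f : V → ℕ), clusterCost (⊤ : SimpleGraph V) Y f =
        ((⊤ : SimpleGraph V).edgeFinset.filter fun e =>
          (Y e = -1 ∧ Sym2.lift ⟨fun u v => f u = f v, fun _ _ => propext eq_comm⟩ e) ∨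
          (Y e = 1 ∧ ¬ Sym2.lift ⟨fun u v => f u = f v, fun _ _ => propext eq_comm⟩ e)).card := by
      intro f
      unfold clusterCost
      congr 1
      ext e
      simp only [Finset.mem_filter, SimpleGraph.mem_edgeFinset]
    have hub : clusterCost (⊤ : SimpleGraph V) Y (fun _ : V => (0:ℕ)) = K := by
      rw [hccf fun _ => 0]
      have hfilter : ((⊤ : SimpleGraph V).edgeFinset.filter fun e =>
          (Y e = -1 ∧ Sym2.lift ⟨fun u v => (fun _ : V => (0:ℕ)) u = (fun _ : V => (0:ℕ)) v,
            fun _ _ => propext eq_comm⟩ e) ∨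
          (Y e = 1 ∧ ¬ Sym2.lift ⟨fun u v => (fun _ : V => (0:ℕ)) u = (fun _ : V => (0:ℕ)) v,
            fun _ _ => propext eq_comm⟩ e))
          = ((⊤ : SimpleGraph V).edgeFinset.filter fun e => Y e = -1) := by
        apply Finset.filter_congr
        intro e he
        clear he
        induction e using Sym2.ind with
        | _ u v => simp [Sym2.lift_mk]
      rw [hfilter, hset,
        Finset.card_image_of_injective _ (Sym2.map.injective g.injective), hNcard]
    -- lower bound
    have hlb : ∀ f : V → ℕ, K ≤ clusterCost (⊤ : SimpleGraph V) Y f := by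
      intro f
      rw [hccf f]
      have claim : ∀ t ∈ S, ∃ e ∈ (⊤ : SimpleGraph V).edgeFinset.filter (fun e =>
          (Y e = -1 ∧ Sym2.lift ⟨fun u v => f u = f v, fun _ _ => propext eq_comm⟩ e) ∨
          (Y e = 1 ∧ ¬ Sym2.lift ⟨fun u v => f u = f v, fun _ _ => propext eq_comm⟩ e)),
          Sym2.map g.symm e ∈ t.sym2 := by
        intro t ht
        obtain ⟨x, y, hxy, hneg, hteq, hzx, hzy⟩ := ccNegEdge_full (hS3 t ht).1 (hS3 t ht).2
        set z : ZMod n := -x - y with hz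
        have hxt : x ∈ t := by rw [hteq]; simp
        have hyt : y ∈ t := by rw [hteq]; simp
        have hzt : z ∈ t := by rw [hteq, hz]; simp
        have hY3 : Y s(g x, g y) = -1 := by
          simp only [hY]
          rw [if_pos]
          rw [Sym2.map_pair_eq]
          simp only [Equiv.symm_apply_apply]
          rw [← hneg]
          exact Finset.mem_image_of_mem _ ht
        have hpos : ∀ a b : ZMod n, a ∈ t → b ∈ t → s(a, b) ≠ s(x, y) → a ≠ b →
            Y s(g a, g b) = 1 := by
          intro a b hat hbt hne hab
          simp only [hY]
          rw [if_neg]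
          rw [Sym2.map_pair_eq]
          simp only [Equiv.symm_apply_apply]
          intro hmem
          have := hNuniq t ht _ hmem (Finset.mk_mem_sym2_iff.mpr ⟨hat, hbt⟩)
          rw [← hneg] at hne
          exact hne this
        have hY1 : Y s(g x, g z) = 1 := by
          refine hpos x z hxt hzt ?_ (fun h => hzx h.symm)
          intro hcontr
          rw [Sym2.eq_iff] at hcontr
          rcases hcontr with ⟨-, h⟩ | ⟨h, -⟩
          · exact hzy h
          · exact hxy h
        have hY2 : Y s(g y, g z) = 1 := by
          refine hpos y z hyt hzt ?_ (fun h => hzy h.symm)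
          intro hcontr
          rw [Sym2.eq_iff] at hcontr
          rcases hcontr with ⟨h, -⟩ | ⟨-, h⟩
          · exact hxy h.symm
          · exact hzx h
        have gxy : g x ≠ g y := fun h => hxy (g.injective h)
        have gxz : g x ≠ g z := fun h => hzx (g.injective h).symm
        have gyz : g y ≠ g z := fun h => hzy (g.injective h).symm
        have hedge : ∀ (a b : V), a ≠ b → s(a,b) ∈ (⊤ : SimpleGraph V).edgeFinset := by
          intro a b hab
          simp [SimpleGraph.mem_edgeFinset, SimpleGraph.edgeSet_top, Sym2.mk_isDiag_iff, hab]
        have hmemt : ∀ a b : ZMod n, a ∈ t → b ∈ t →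
            Sym2.map g.symm s(g a, g b) ∈ t.sym2 := by
          intro a b hat hbt
          rw [Sym2.map_pair_eq]
          simp only [Equiv.symm_apply_apply]
          exact Finset.mk_mem_sym2_iff.mpr ⟨hat, hbt⟩
        by_cases h1 : f (g x) = f (g z)
        · by_cases h2 : f (g y) = f (g z)
          · refine ⟨s(g x, g y), Finset.mem_filter.mpr ⟨hedge _ _ gxy, Or.inl ⟨hY3, ?_⟩⟩,
              hmemt x y hxt hyt⟩
            rw [Sym2.lift_mk]
            exact h1.trans h2.symm
          · refine ⟨s(g y, g z), Finset.mem_filter.mpr ⟨hedge _ _ gyz, Or.inr ⟨hY2, ?_⟩⟩,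
              hmemt y z hyt hzt⟩
            rw [Sym2.lift_mk]
            convert h2 using 3
        · refine ⟨s(g x, g z), Finset.mem_filter.mpr ⟨hedge _ _ gxz, Or.inr ⟨hY1, ?_⟩⟩,
            hmemt x z hxt hzt⟩
          rw [Sym2.lift_mk]
          exact h1
      haveI : Nonempty (Sym2 V) := ⟨s(Classical.arbitrary V, Classical.arbitrary V)⟩
      choose! ε hε1 hε2 using claim
      have hinj2 : Set.InjOn ε (↑S : Set (Finset (ZMod n))) := by
        intro t1 ht1 t2 ht2 heq
        rw [Finset.mem_coe] at ht1 ht2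
        have hd : ¬ (ε t1).IsDiag := by
          have h := Finset.mem_filter.mp (hε1 t1 ht1)
          have := h.1
          simp only [SimpleGraph.mem_edgeFinset, SimpleGraph.edgeSet_top,
            Set.mem_setOf_eq] at this
          exact this
        have hd' : ¬ (Sym2.map g.symm (ε t1)).IsDiag := by
          rw [Sym2.isDiag_map g.symm.injective]
          exact hd
        have m1 := hε2 t1 ht1
        have m2 := hε2 t2 ht2
        rw [heq] at m1
        exact cc_tri_edge_disj (hS3 t1 ht1).1 (hS3 t1 ht1).2 (hS3 t2 ht2).1 (hS3 t2 ht2).2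
          m1 m2 (heq ▸ hd')
      calc K = S.card := hScard.symm
        _ ≤ _ := Finset.card_le_card_of_injOn ε (fun t ht => hε1 t ht) hinj2
    -- conclude
    have hmemK : K ∈ {c | ∃ f : V → ℕ, clusterCost (⊤ : SimpleGraph V) Y f = c} := ⟨_, hub⟩
    have hle : ccIndex (⊤ : SimpleGraph V) Y ≤ K := Nat.sInf_le hmemK
    have hge : K ≤ ccIndex (⊤ : SimpleGraph V) Y := by
      obtain ⟨f, hf⟩ := Nat.sInf_mem (⟨K, hmemK⟩ : Set.Nonempty
        {c | ∃ f : V → ℕ, clusterCost (⊤ : SimpleGraph V) Y f = c})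
      rw [ccIndex, ← hf]
      exact hlb f
    omega
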